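/- Let g₀ : ℝ → ℂ be bounded with exponential decay (so that its Zak transform converges absolutely), let c, d ∈ ℓ¹(ℤ), and define g = Σ_{k,l∈ℤ} c_k d_l e^{2πil·} g₀(·−k). Then the Zak transform of g satisfies Zg(x,ξ) = ĉ(−ξ) d̂(x) Zg₀(x,ξ) for all x, ξ ∈ ℝ, where ĉ(ξ) = Σ_k c_k e^{2πikξ} and d̂(x) = Σ_l d_l e^{2πilx}. -/

import Mathlib

open Complex Real

noncomputable section

/-- The Zak transform `Zg(x,ξ) = ∑_{k∈ℤ} g(x - k) e^{2πikξ}`. -/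
def zakTransform (g : ℝ → ℂ) (x ξ : ℝ) : ℂ :=
  ∑' k : ℤ, g (x - k) * Complex.exp (2 * π * I * (k * ξ))

end

private lemma zak_summable_exp (a x : ℝ) (ha : 0 < a) :
    Summable fun n : ℤ => Real.exp (-a * |x - n|) := by
  have geo : Summable fun n : ℕ => Real.exp (a * |x|) * Real.exp (-a) ^ n :=
    (summable_geometric_of_lt_one (Real.exp_pos _).le
      (by rw [Real.exp_lt_one_iff]; linarith)).mul_left _
  have key : ∀ (t : ℝ) (n : ℕ), (n : ℝ) - |x| ≤ |t| →
      Real.exp (-a * |t|) ≤ Real.exp (a * |x|) * Real.exp (-a) ^ n := by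
    intro t n hn
    rw [← Real.exp_nat_mul, ← Real.exp_add]
    apply Real.exp_le_exp.2
    nlinarith
  apply Summable.of_nat_of_neg
  · apply Summable.of_nonneg_of_le (fun n => (Real.exp_pos _).le) (fun n => ?_) geo
    refine key _ n ?_
    have h1 : |(n:ℝ)| - |x| ≤ |(n:ℝ) - x| := abs_sub_abs_le_abs_sub _ _
    have h2 : |(n:ℝ)| = n := by simp
    have h4 : ((n:ℝ) - x) = -(x - (n:ℝ)) := by ring
    rw [h2, h4, abs_neg] at h1
    exact_mod_cast h1
  · apply Summable.of_nonneg_of_le (fun n => (Real.exp_pos _).le) (fun n => ?_) geo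
    refine key _ n ?_
    have h1 : |(n:ℝ)| - |(-x)| ≤ |(n:ℝ) - (-x)| := abs_sub_abs_le_abs_sub _ _
    have h2 : |(n:ℝ)| = n := by simp
    have h3 : |(-x)| = |x| := abs_neg x
    have h4 : ((n:ℝ) - (-x)) = x - ((-n : ℤ) : ℝ) := by push_cast; ring
    rw [h2, h3, h4] at h1
    exact h1

private lemma zak_exp_norm (k : ℤ) (t : ℝ) :
    ‖Complex.exp (2 * π * I * ((k : ℂ) * (t : ℂ)))‖ = 1 := by
  rw [Complex.norm_exp]
  norm_num [Complex.mul_re, Complex.mul_im]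

private lemma zak_exp_int (n : ℤ) : Complex.exp (2 * π * I * (n : ℂ)) = 1 := by
  simpa [mul_comm] using Complex.exp_int_mul_two_pi_mul_I n

set_option maxHeartbeats 1000000 in
/-- **Zak transform of a `C_{g₀}`-class window.** Let `g₀` be bounded with exponential
decay, `c, d ∈ ℓ¹(ℤ)`, and `g = ∑_{k,l} c_k d_l M_l T_k g₀`. Then
`Zg(x,ξ) = ĉ(-ξ) d̂(x) Zg₀(x,ξ)` for all `x, ξ ∈ ℝ`. -/
theorem zakTransform_of_C_class
    (g₀ : ℝ → ℂ)
    (hdecay : ∃ C a : ℝ, 0 < a ∧ ∀ t : ℝ, ‖g₀ t‖ ≤ C * Real.exp (-a * |t|))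
    (c d : ℤ → ℂ) (hc : Summable fun k : ℤ => ‖c k‖) (hd : Summable fun l : ℤ => ‖d l‖)
    (g : ℝ → ℂ)
    (hgdef : ∀ t : ℝ, g t = ∑' kl : ℤ × ℤ,
      c kl.1 * d kl.2 * Complex.exp (2 * π * I * (kl.2 * t)) * g₀ (t - kl.1)) :
    ∀ x ξ : ℝ, zakTransform g x ξ =
      (∑' k : ℤ, c k * Complex.exp (2 * π * I * (k * (-ξ)))) *
      (∑' l : ℤ, d l * Complex.exp (2 * π * I * (l * x))) *
      zakTransform g₀ x ξ := by
  intro x ξ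
  obtain ⟨C, a, ha, hC⟩ := hdecay
  set A : ℤ → ℂ := fun k => c k * Complex.exp (2 * π * I * (k * (-ξ))) with hA_def
  set B : ℤ → ℂ := fun l => d l * Complex.exp (2 * π * I * (l * x)) with hB_def
  set G : ℤ → ℂ := fun m => g₀ (x - m) * Complex.exp (2 * π * I * (m * ξ)) with hG_def
  -- norm summability facts
  have hA : Summable fun k : ℤ => ‖A k‖ := by
    refine hc.congr fun k => ?_
    have h := zak_exp_norm k (-ξ)
    push_cast at h
    rw [hA_def, norm_mul, h, mul_one]
  have hB : Summable fun l : ℤ => ‖B l‖ := by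
    refine hd.congr fun l => ?_
    rw [hB_def, norm_mul, zak_exp_norm l x, mul_one]
  have hG : Summable fun m : ℤ => ‖G m‖ := by
    refine Summable.of_nonneg_of_le (fun m => norm_nonneg _) (fun m => ?_)
      ((zak_summable_exp a x ha).mul_left C)
    rw [hG_def, norm_mul, zak_exp_norm m ξ, mul_one]
    exact hC _
  have hAB : Summable fun kl : ℤ × ℤ => ‖A kl.1 * B kl.2‖ := hA.mul_norm hB
  -- the product-form summand
  set H : (ℤ × ℤ) × ℤ → ℂ := fun p => A p.1.1 * B p.1.2 * G p.2 with hH_def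
  have hH : Summable H :=
    summable_mul_of_summable_norm (f := fun kl : ℤ × ℤ => A kl.1 * B kl.2) (g := G) hAB hG
  -- the shift equivalence
  set σ : (ℤ × ℤ) × ℤ ≃ (ℤ × ℤ) × ℤ :=
    ⟨fun p => (p.1, p.2 + p.1.1), fun p => (p.1, p.2 - p.1.1),
      fun p => by simp, fun p => by simp⟩ with hσ_def
  -- the original summand
  set F : (ℤ × ℤ) × ℤ → ℂ := fun p =>
    c p.1.1 * d p.1.2 * Complex.exp (2 * π * I * (p.1.2 * ((x : ℂ) - (p.2 : ℂ)))) *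
      g₀ (x - p.2 - p.1.1) * Complex.exp (2 * π * I * (p.2 * ξ)) with hF_def
  have hFH : ∀ p, F p = H (σ p) := by
    rintro ⟨⟨k, l⟩, n⟩
    simp only [hF_def, hH_def, hσ_def, hA_def, hB_def, hG_def, Equiv.coe_fn_mk]
    have e1 : Complex.exp (2 * π * I * ((l : ℂ) * ((x : ℂ) - (n : ℂ)))) =
        Complex.exp (2 * π * I * ((l : ℂ) * x)) := by
      rw [show 2 * (π:ℂ) * I * ((l : ℂ) * ((x : ℂ) - (n : ℂ)))
          = 2 * π * I * ((l : ℂ) * x) + 2 * π * I * (((-(l * n) : ℤ) : ℂ)) by push_cast; ring,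
        Complex.exp_add, zak_exp_int, mul_one]
    have e2 : Complex.exp (2 * π * I * ((k : ℂ) * -(ξ : ℂ))) *
        Complex.exp (2 * π * I * (((n : ℂ) + (k : ℂ)) * ξ)) =
        Complex.exp (2 * π * I * ((n : ℂ) * ξ)) := by
      rw [← Complex.exp_add]
      congr 1
      ring
    have e3 : x - (((n + k) : ℤ) : ℝ) = x - n - k := by push_cast; ring
    rw [e1, e3]
    push_cast
    linear_combination -(c k * d l * Complex.exp (2 * (π:ℂ) * I * ((l : ℂ) * x)) *
      g₀ (x - n - k)) * e2
  have hF : Summable F := (σ.summable_iff.mpr hH).congr fun p => (hFH p).symm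
  have hF' : Summable fun q : ℤ × (ℤ × ℤ) => F (q.2, q.1) := by
    exact (Equiv.prodComm ℤ (ℤ × ℤ)).summable_iff.mpr hF
  -- the left-hand side
  have hterm : ∀ n : ℤ, g (x - n) * Complex.exp (2 * π * I * (n * ξ)) =
      ∑' kl : ℤ × ℤ, F (kl, n) := by
    intro n
    rw [hgdef, ← tsum_mul_right]
    refine tsum_congr fun kl => ?_
    simp only [hF_def]
    push_cast
    ring
  calc zakTransform g x ξ
      = ∑' n : ℤ, ∑' kl : ℤ × ℤ, F (kl, n) := tsum_congr hterm
    _ = ∑' q : ℤ × (ℤ × ℤ), F (q.2, q.1) := (Summable.tsum_prod' hF' hF'.prod_factor).symm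
    _ = ∑' p : (ℤ × ℤ) × ℤ, F p := by exact (Equiv.prodComm ℤ (ℤ × ℤ)).tsum_eq F
    _ = ∑' p : (ℤ × ℤ) × ℤ, H (σ p) := tsum_congr hFH
    _ = ∑' p : (ℤ × ℤ) × ℤ, H p := σ.tsum_eq H
    _ = (∑' kl : ℤ × ℤ, A kl.1 * B kl.2) * ∑' m : ℤ, G m :=
        (tsum_mul_tsum_of_summable_norm (f := fun kl : ℤ × ℤ => A kl.1 * B kl.2) (g := G) hAB hG).symm
    _ = (∑' k : ℤ, A k) * (∑' l : ℤ, B l) * ∑' m : ℤ, G m := by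
        rw [tsum_mul_tsum_of_summable_norm hA hB]
    _ = _ := by rw [zakTransform]
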